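/- Let β̂ : ℝ → ℝ be a convex function, let c₀ > 0, and assume the growth condition: for all r, s ∈ ℝ, if s is a subgradient of β̂ at r then |s| ≤ c₀·(1 + β̂(r)). Then for every δ > 0 and every r ∈ ℝ, the Yosida approximation and Moreau–Yosida regularization satisfy the same growth condition with the same constant: |β_δ(r)| ≤ c₀·(1 + β̂_δ(r)), where J_δ(r) is the unique minimizer of s ↦ (r − s)²/(2δ) + β̂(s), β_δ(r) := (r − J_δ(r))/δ and β̂_δ(r) := (r − J_δ(r))²/(2δ) + β̂(J_δ(r)). -/

import Mathlib

/-- If every subgradient `s` of the convex function `β̂` at `r` satisfies the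
growth condition `|s| ≤ c₀(1 + β̂(r))`, then the Yosida approximation and the
Moreau–Yosida regularization satisfy `|β_δ(r)| ≤ c₀(1 + β̂_δ(r))` with the same
constant. -/
theorem yosida_growth_condition
    (B : ℝ → ℝ) (hB : ConvexOn ℝ Set.univ B) (c₀ : ℝ) (hc₀ : 0 < c₀)
    (hgrowth : ∀ r s : ℝ, (∀ t : ℝ, B r + s * (t - r) ≤ B t) → |s| ≤ c₀ * (1 + B r))
    (δ : ℝ) (hδ : 0 < δ) (r j : ℝ)
    (hj : ∀ s : ℝ, (r - j) ^ 2 / (2 * δ) + B j ≤ (r - s) ^ 2 / (2 * δ) + B s) :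
    |(r - j) / δ| ≤ c₀ * (1 + ((r - j) ^ 2 / (2 * δ) + B j)) := by
  have hsub : ∀ t : ℝ, B j + (r - j) / δ * (t - j) ≤ B t := by
    intro t
    refine le_of_forall_pos_le_add ?_
    intro ε hε
    set lam : ℝ := min 1 (ε * 2 * δ / ((t - j) ^ 2 + 1)) with hlam
    have hden : (0:ℝ) < (t - j) ^ 2 + 1 := by positivity
    have hlam0 : 0 < lam := lt_min one_pos (by positivity)
    have hlam1 : lam ≤ 1 := min_le_left _ _
    have hconv := hB.2 (Set.mem_univ j) (Set.mem_univ t)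
      (show (0:ℝ) ≤ 1 - lam by linarith) (le_of_lt hlam0) (show (1 - lam) + lam = 1 by ring)
    simp only [smul_eq_mul] at hconv
    have hs := hj ((1 - lam) * j + lam * t)
    have h2δ : (0:ℝ) < 2 * δ := by linarith
    have h1 : (r - j) ^ 2 / (2 * δ) + B j ≤
        ((r - j) ^ 2 - 2 * lam * (r - j) * (t - j) + lam ^ 2 * (t - j) ^ 2) / (2 * δ)
          + ((1 - lam) * B j + lam * B t) := by
      have hexp : (r - ((1 - lam) * j + lam * t)) ^ 2
          = (r - j) ^ 2 - 2 * lam * (r - j) * (t - j) + lam ^ 2 * (t - j) ^ 2 := by ring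
      calc _ ≤ _ := hs
        _ ≤ _ := by rw [hexp]; linarith
    have c1 : (r - j) ^ 2 / (2 * δ) * (2 * δ) = (r - j) ^ 2 :=
      div_mul_cancel₀ _ (ne_of_gt h2δ)
    have c2 : ((r - j) ^ 2 - 2 * lam * (r - j) * (t - j) + lam ^ 2 * (t - j) ^ 2) / (2 * δ)
        * (2 * δ) = (r - j) ^ 2 - 2 * lam * (r - j) * (t - j) + lam ^ 2 * (t - j) ^ 2 :=
      div_mul_cancel₀ _ (ne_of_gt h2δ)
    have hM := mul_le_mul_of_nonneg_right h1 h2δ.le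
    rw [add_mul, add_mul, c1, c2] at hM
    have h3 : B j + (r - j) / δ * (t - j) ≤ B t + lam * (t - j) ^ 2 / (2 * δ) := by
      have key2 : (B j + (r - j) / δ * (t - j)) * (2 * δ)
          ≤ (B t + lam * (t - j) ^ 2 / (2 * δ)) * (2 * δ) := by
        have eL : (B j + (r - j) / δ * (t - j)) * (2 * δ)
            = B j * (2 * δ) + 2 * (r - j) * (t - j) := by
          field_simp
        have eR : (B t + lam * (t - j) ^ 2 / (2 * δ)) * (2 * δ)
            = B t * (2 * δ) + lam * (t - j) ^ 2 := by
          field_simp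
        rw [eL, eR]
        nlinarith [hM, hlam0]
      exact le_of_mul_le_mul_right key2 h2δ
    have hlam2 : lam * (t - j) ^ 2 / (2 * δ) ≤ ε := by
      have hl : lam ≤ ε * 2 * δ / ((t - j) ^ 2 + 1) := min_le_right _ _
      rw [div_le_iff₀ (by linarith : (0:ℝ) < 2 * δ)]
      have : lam * ((t - j) ^ 2 + 1) ≤ ε * 2 * δ := by
        rw [← le_div_iff₀ hden]; exact hl
      nlinarith [hlam0]
    linarith
  have h1 := hgrowth j ((r - j) / δ) hsub
  have h2 : (0:ℝ) ≤ (r - j) ^ 2 / (2 * δ) := by positivity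
  nlinarith [h1, h2, hc₀]
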